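/- arXiv:1910.07211 — 8 statements merged into one kernel-verified Lean document; each statement's English description precedes it below -/
import Mathlib

section
/- Let V be a finite-dimensional real inner product space and L : V → V a self-adjoint linear operator. Let s ≥ 1, let (a_{ij})_{i,j=1}^s and (b_i)_{i=1}^s be real Runge–Kutta coefficients, and define M_{ij} = b_i a_{ij} + b_j a_{ji} − b_i b_j. Given Φⁿ ∈ V, Δt ∈ ℝ, and k_1,…,k_s ∈ V, define the stage values Φ_i = Φⁿ + Δt Σ_{j=1}^s a_{ij} k_j and the update Φ^{n+1} = Φⁿ + Δt Σ_{i=1}^s b_i k_i. Then (1/2)⟨Φ^{n+1}, L Φ^{n+1}⟩ − (1/2)⟨Φⁿ, L Φⁿ⟩ = Δt Σ_{i=1}^s b_i ⟨k_i, L Φ_i⟩ − (Δt²/2) Σ_{i,j=1}^s M_{ij} ⟨k_i, L k_j⟩. -/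
open scoped InnerProductSpace BigOperators

/-- Key Runge–Kutta energy identity for a self-adjoint linear operator `L`. -/
theorem leqrk_energy_identity
    {V : Type*} [NormedAddCommGroup V] [InnerProductSpace ℝ V]
    [FiniteDimensional ℝ V]
    (L : V →ₗ[ℝ] V) (hL : ∀ u v : V, ⟪L u, v⟫_ℝ = ⟪u, L v⟫_ℝ)
    (s : ℕ) (hs : 1 ≤ s) (a : Fin s → Fin s → ℝ) (b : Fin s → ℝ)
    (Φn : V) (Δt : ℝ) (k : Fin s → V)
    (Φ : Fin s → V) (hΦ : ∀ i, Φ i = Φn + Δt • ∑ j, a i j • k j)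
    (Φn1 : V) (hΦn1 : Φn1 = Φn + Δt • ∑ i, b i • k i) :
    (1/2) * ⟪Φn1, L Φn1⟫_ℝ - (1/2) * ⟪Φn, L Φn⟫_ℝ
      = Δt * ∑ i, b i * ⟪k i, L (Φ i)⟫_ℝ
        - (Δt ^ 2 / 2) * ∑ i, ∑ j,
            (b i * a i j + b j * a j i - b i * b j) * ⟪k i, L (k j)⟫_ℝ := by
  have hsym : ∀ u v : V, ⟪u, L v⟫_ℝ = ⟪v, L u⟫_ℝ := fun u v => by
    rw [← hL, real_inner_comm]
  set K : V := ∑ i, b i • k i with hK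
  have hKΦn : ⟪K, L Φn⟫_ℝ = ∑ i, b i * ⟪k i, L Φn⟫_ℝ := by
    rw [hK, sum_inner]
    simp [real_inner_smul_left]
  have hKK : ⟪K, L K⟫_ℝ = ∑ i, ∑ j, b i * b j * ⟪k i, L (k j)⟫_ℝ := by
    rw [hK, sum_inner]
    refine Finset.sum_congr rfl fun i _ => ?_
    rw [real_inner_smul_left, map_sum, inner_sum, Finset.mul_sum]
    refine Finset.sum_congr rfl fun j _ => ?_
    rw [map_smul, real_inner_smul_right]
    ring
  have h1 : ⟪Φn1, L Φn1⟫_ℝ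
      = ⟪Φn, L Φn⟫_ℝ + 2 * Δt * ⟪K, L Φn⟫_ℝ + Δt ^ 2 * ⟪K, L K⟫_ℝ := by
    rw [hΦn1]
    simp only [map_add, map_smul, inner_add_left, inner_add_right,
      real_inner_smul_left, real_inner_smul_right]
    rw [hsym Φn K]
    ring
  have h2 : ∀ i, ⟪k i, L (Φ i)⟫_ℝ
      = ⟪k i, L Φn⟫_ℝ + Δt * ∑ j, a i j * ⟪k i, L (k j)⟫_ℝ := by
    intro i
    rw [hΦ i]
    simp only [map_add, map_smul, inner_add_right, real_inner_smul_right,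
      map_sum, inner_sum, Finset.mul_sum]
  have h3 : ∑ i, ∑ j, (b j * a j i) * ⟪k i, L (k j)⟫_ℝ
      = ∑ i, ∑ j, (b i * a i j) * ⟪k i, L (k j)⟫_ℝ := by
    rw [Finset.sum_comm]
    refine Finset.sum_congr rfl fun i _ => Finset.sum_congr rfl fun j _ => ?_
    rw [hsym (k j) (k i)]
  set S1 : ℝ := ∑ i, b i * ⟪k i, L Φn⟫_ℝ with hS1
  set S2 : ℝ := ∑ i, ∑ j, (b i * a i j) * ⟪k i, L (k j)⟫_ℝ with hS2
  set S3 : ℝ := ∑ i, ∑ j, (b i * b j) * ⟪k i, L (k j)⟫_ℝ with hS3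
  have hRHS1 : ∑ i, b i * ⟪k i, L (Φ i)⟫_ℝ = S1 + Δt * S2 := by
    simp only [h2, mul_add, Finset.sum_add_distrib]
    rw [hS1, hS2]
    congr 1
    simp only [Finset.mul_sum]
    exact Finset.sum_congr rfl fun i _ => Finset.sum_congr rfl fun j _ => by ring
  have hM : ∑ i, ∑ j, (b i * a i j + b j * a j i - b i * b j) * ⟪k i, L (k j)⟫_ℝ
      = 2 * S2 - S3 := by
    simp only [sub_mul, add_mul, Finset.sum_sub_distrib, Finset.sum_add_distrib]
    rw [hS2, hS3, h3]
    ring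
  rw [h1, hKΦn, hKK, hRHS1, hM]
  ring
end

section
/- Let V be a finite-dimensional real inner product space and L : V → V a self-adjoint, positive semi-definite linear operator. Let s ≥ 1, let (a_{ij})_{i,j=1}^s and (b_i)_{i=1}^s be real Runge–Kutta coefficients, define M_{ij} = b_i a_{ij} + b_j a_{ji} − b_i b_j, and assume Σ_{i,j} M_{ij} x_i x_j ≥ 0 for all x ∈ ℝ^s. Given Φⁿ ∈ V, Δt ∈ ℝ, and k_1,…,k_s ∈ V, define Φ_i = Φⁿ + Δt Σ_{j=1}^s a_{ij} k_j and Φ^{n+1} = Φⁿ + Δt Σ_{i=1}^s b_i k_i. Then (1/2)⟨Φ^{n+1}, L Φ^{n+1}⟩ − (1/2)⟨Φⁿ, L Φⁿ⟩ ≤ Δt Σ_{i=1}^s b_i ⟨k_i, L Φ_i⟩. -/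
open scoped InnerProductSpace BigOperators
open scoped MatrixOrder

/-- If `M` is a positive semidefinite quadratic form and `L` is positive semidefinite
self-adjoint, then `∑ᵢⱼ Mᵢⱼ ⟪kᵢ, L kⱼ⟫ ≥ 0`. -/
lemma leqrk_key {V : Type*} [NormedAddCommGroup V] [InnerProductSpace ℝ V]
    (L : V →ₗ[ℝ] V) (hLsym : ∀ u v : V, ⟪L u, v⟫_ℝ = ⟪u, L v⟫_ℝ)
    (hLpos : ∀ u : V, 0 ≤ ⟪L u, u⟫_ℝ)
    (s : ℕ) (M : Matrix (Fin s) (Fin s) ℝ) (hMpsd : M.PosSemidef)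
    (k : Fin s → V) :
    0 ≤ ∑ i, ∑ j, M i j * ⟪k i, L (k j)⟫_ℝ := by
  set C := CFC.sqrt M with hC
  have hCC : C * C = M := CFC.sqrt_mul_sqrt_self M hMpsd.nonneg
  have hCsym : ∀ i j, C i j = C j i := by
    intro i j
    have := (Matrix.nonneg_iff_posSemidef.mp (CFC.sqrt_nonneg M)).1
    have h := congrArg (fun A => A i j) this.symm
    simpa [Matrix.conjTranspose_apply] using h
  have expand : ∀ i j, M i j = ∑ α, C α i * C α j := by
    intro i j
    have h := congrArg (fun A => A i j) hCC
    simp only [Matrix.mul_apply] at h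
    rw [← h]
    exact Finset.sum_congr rfl fun α _ => by rw [hCsym i α]
  calc (0:ℝ) ≤ ∑ α, ⟪L (∑ i, C α i • k i), (∑ i, C α i • k i)⟫_ℝ :=
        Finset.sum_nonneg fun α _ => hLpos _
    _ = ∑ i, ∑ j, M i j * ⟪k i, L (k j)⟫_ℝ := by
        have : ∀ α : Fin s, ⟪L (∑ i, C α i • k i), (∑ i, C α i • k i)⟫_ℝ
            = ∑ i, ∑ j, C α i * C α j * ⟪k i, L (k j)⟫_ℝ := by
          intro α
          rw [hLsym, map_sum, sum_inner]
          refine Finset.sum_congr rfl fun i _ => ?_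
          rw [real_inner_smul_left, inner_sum, Finset.mul_sum]
          refine Finset.sum_congr rfl fun j _ => ?_
          rw [map_smul, real_inner_smul_right]
          ring
        rw [Finset.sum_congr rfl fun α _ => this α, Finset.sum_comm]
        refine Finset.sum_congr rfl fun i _ => ?_
        rw [Finset.sum_comm]
        refine Finset.sum_congr rfl fun j _ => ?_
        rw [expand i j, Finset.sum_mul]

/-- Runge–Kutta energy inequality for the quadratic part `(1/2)⟪Φ, LΦ⟫` under the
algebraic-stability condition that `M` is positive semi-definite. -/
theorem leqrk_quadratic_energy_inequality
    {V : Type*} [NormedAddCommGroup V] [InnerProductSpace ℝ V]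
    [FiniteDimensional ℝ V]
    (L : V →ₗ[ℝ] V) (hLsym : ∀ u v : V, ⟪L u, v⟫_ℝ = ⟪u, L v⟫_ℝ)
    (hLpos : ∀ u : V, 0 ≤ ⟪L u, u⟫_ℝ)
    (s : ℕ) (hs : 1 ≤ s) (a : Fin s → Fin s → ℝ) (b : Fin s → ℝ)
    (hM : ∀ x : Fin s → ℝ,
      0 ≤ ∑ i, ∑ j, (b i * a i j + b j * a j i - b i * b j) * x i * x j)
    (Φn : V) (Δt : ℝ) (k : Fin s → V)
    (Φ : Fin s → V) (hΦ : ∀ i, Φ i = Φn + Δt • ∑ j, a i j • k j)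
    (Φn1 : V) (hΦn1 : Φn1 = Φn + Δt • ∑ i, b i • k i) :
    (1/2) * ⟪Φn1, L Φn1⟫_ℝ - (1/2) * ⟪Φn, L Φn⟫_ℝ
      ≤ Δt * ∑ i, b i * ⟪k i, L (Φ i)⟫_ℝ := by
  set M : Matrix (Fin s) (Fin s) ℝ :=
    Matrix.of fun i j => b i * a i j + b j * a j i - b i * b j with hMdef
  have hMpsd : M.PosSemidef := by
    refine Matrix.PosSemidef.of_dotProduct_mulVec_nonneg ?_ ?_
    · ext i j
      simp only [Matrix.conjTranspose_apply, Matrix.of_apply, hMdef, star_trivial]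
      ring
    · intro x
      have := hM x
      simp only [dotProduct, Matrix.mulVec, dotProduct, Pi.star_apply,
        star_trivial, Matrix.of_apply, hMdef]
      calc (0:ℝ) ≤ ∑ i, ∑ j, (b i * a i j + b j * a j i - b i * b j) * x i * x j := hM x
        _ = ∑ i, x i * ∑ j, (b i * a i j + b j * a j i - b i * b j) * x j := by
            refine Finset.sum_congr rfl fun i _ => ?_
            rw [Finset.mul_sum]
            exact Finset.sum_congr rfl fun j _ => by ring
  set G : Fin s → Fin s → ℝ := fun i j => ⟪k i, L (k j)⟫_ℝ with hGdef
  have hkey : 0 ≤ ∑ i, ∑ j, M i j * G i j :=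
    leqrk_key L hLsym hLpos s M hMpsd k
  have hG : ∀ i j, G i j = G j i := fun i j => by
    simp only [hGdef]
    rw [← hLsym, real_inner_comm]
  set K : V := ∑ i, b i • k i with hK
  have hKinner : ∀ v : V, ⟪K, L v⟫_ℝ = ∑ i, b i * ⟪k i, L v⟫_ℝ := by
    intro v
    rw [hK, sum_inner]
    exact Finset.sum_congr rfl fun i _ => real_inner_smul_left _ _ _
  have hKK : ⟪K, L K⟫_ℝ = ∑ i, ∑ j, b i * b j * G i j := by
    rw [hKinner]
    refine Finset.sum_congr rfl fun i _ => ?_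
    rw [hK, map_sum, inner_sum, Finset.mul_sum]
    refine Finset.sum_congr rfl fun j _ => ?_
    rw [map_smul, real_inner_smul_right]
    ring
  have h3 : ∀ i, ⟪k i, L (Φ i)⟫_ℝ = ⟪k i, L Φn⟫_ℝ + Δt * ∑ j, a i j * G i j := by
    intro i
    simp only [hΦ i, map_add, map_smul, map_sum, inner_add_right, inner_sum,
      real_inner_smul_right, Finset.mul_sum, hGdef]
  have hcross : ⟪Φn, L K⟫_ℝ = ⟪K, L Φn⟫_ℝ := by
    rw [← hLsym, real_inner_comm]
  have h4 : ⟪Φn1, L Φn1⟫_ℝ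
      = ⟪Φn, L Φn⟫_ℝ + 2 * Δt * ⟪K, L Φn⟫_ℝ + Δt^2 * ⟪K, L K⟫_ℝ := by
    rw [hΦn1, map_add, map_smul, inner_add_left, inner_add_right, inner_add_right,
      real_inner_smul_left, real_inner_smul_left, real_inner_smul_right,
      real_inner_smul_right, hcross]
    ring
  -- rewrite RHS
  have hRHS : ∑ i, b i * ⟪k i, L (Φ i)⟫_ℝ
      = ⟪K, L Φn⟫_ℝ + Δt * ∑ i, ∑ j, b i * (a i j * G i j) := by
    rw [hKinner]
    have step : ∀ i : Fin s, b i * ⟪k i, L (Φ i)⟫_ℝ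
        = b i * ⟪k i, L Φn⟫_ℝ + Δt * ∑ j, b i * (a i j * G i j) := by
      intro i
      rw [h3 i, mul_add]
      congr 1
      rw [Finset.mul_sum, Finset.mul_sum, Finset.mul_sum]
      refine Finset.sum_congr rfl fun j _ => by ring
    rw [Finset.sum_congr rfl fun i _ => step i, Finset.sum_add_distrib, ← Finset.mul_sum]
  have hswap : ∑ i, ∑ j, (b j * a j i) * G i j = ∑ i, ∑ j, (b i * a i j) * G i j := by
    rw [Finset.sum_comm]
    refine Finset.sum_congr rfl fun i _ => Finset.sum_congr rfl fun j _ => ?_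
    rw [hG j i]
  have hsplit : ∑ i, ∑ j, M i j * G i j
      = 2 * (∑ i, ∑ j, (b i * a i j) * G i j) - ∑ i, ∑ j, b i * b j * G i j := by
    rw [← hswap]
    simp only [hMdef, Matrix.of_apply, sub_mul, add_mul, Finset.sum_sub_distrib,
      Finset.sum_add_distrib, ← hswap]
    rw [hswap]
    ring
  have hQT : ∑ i, ∑ j, b i * b j * G i j ≤ 2 * ∑ i, ∑ j, (b i * a i j) * G i j := by
    linarith [hsplit ▸ hkey]
  rw [h4, hRHS, hKK]
  have hT : ∑ i, ∑ j, b i * (a i j * G i j) = ∑ i, ∑ j, (b i * a i j) * G i j := by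
    refine Finset.sum_congr rfl fun i _ => Finset.sum_congr rfl fun j _ => by ring
  rw [hT]
  nlinarith [sq_nonneg Δt, mul_nonneg (sq_nonneg Δt)
    (sub_nonneg.mpr hQT)]
end

section
/- Let W be a finite-dimensional real inner product space. Let s ≥ 1, let (a_{ij})_{i,j=1}^s and (b_i)_{i=1}^s be real Runge–Kutta coefficients, define M_{ij} = b_i a_{ij} + b_j a_{ji} − b_i b_j, and assume Σ_{i,j} M_{ij} x_i x_j ≥ 0 for all x ∈ ℝ^s. Given qⁿ ∈ W, Δt ∈ ℝ, and l_1,…,l_s ∈ W, define Q_i = qⁿ + Δt Σ_{j=1}^s a_{ij} l_j and q^{n+1} = qⁿ + Δt Σ_{i=1}^s b_i l_i. Then ‖q^{n+1}‖² − ‖qⁿ‖² ≤ 2 Δt Σ_{i=1}^s b_i ⟨l_i, Q_i⟩. -/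
open scoped InnerProductSpace BigOperators

/-- Runge–Kutta energy inequality for the squared-norm part `‖q‖²` under the
algebraic-stability condition that `M` is positive semi-definite. -/
theorem leqrk_norm_sq_inequality
    {W : Type*} [NormedAddCommGroup W] [InnerProductSpace ℝ W]
    [FiniteDimensional ℝ W]
    (s : ℕ) (hs : 1 ≤ s) (a : Fin s → Fin s → ℝ) (b : Fin s → ℝ)
    (hM : ∀ x : Fin s → ℝ,
      0 ≤ ∑ i, ∑ j, (b i * a i j + b j * a j i - b i * b j) * x i * x j)
    (qn : W) (Δt : ℝ) (l : Fin s → W)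
    (Q : Fin s → W) (hQ : ∀ i, Q i = qn + Δt • ∑ j, a i j • l j)
    (qn1 : W) (hqn1 : qn1 = qn + Δt • ∑ i, b i • l i) :
    ‖qn1‖ ^ 2 - ‖qn‖ ^ 2 ≤ 2 * Δt * ∑ i, b i * ⟪l i, Q i⟫_ℝ := by
  classical
  -- Key positivity: ∑ M_ij ⟪l i, l j⟫ ≥ 0, via an orthonormal basis
  have key : 0 ≤ ∑ i, ∑ j, (b i * a i j + b j * a j i - b i * b j) * ⟪l i, l j⟫_ℝ := by
    set e := stdOrthonormalBasis ℝ W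
    have hinner : ∀ i j : Fin s, ⟪l i, l j⟫_ℝ = ∑ k, ⟪l i, e k⟫_ℝ * ⟪l j, e k⟫_ℝ := by
      intro i j
      rw [← e.sum_inner_mul_inner (l i) (l j)]
      exact Finset.sum_congr rfl fun k _ => by rw [real_inner_comm (e k) (l j)]
    calc (0:ℝ) ≤ ∑ k, ∑ i, ∑ j,
          (b i * a i j + b j * a j i - b i * b j) * ⟪l i, e k⟫_ℝ * ⟪l j, e k⟫_ℝ :=
        Finset.sum_nonneg fun k _ => hM fun i => ⟪l i, e k⟫_ℝ
      _ = ∑ i, ∑ j, (b i * a i j + b j * a j i - b i * b j) * ⟪l i, l j⟫_ℝ := by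
        rw [Finset.sum_comm]
        refine Finset.sum_congr rfl fun i _ => ?_
        rw [Finset.sum_comm]
        refine Finset.sum_congr rfl fun j _ => ?_
        rw [hinner i j, Finset.mul_sum]
        exact Finset.sum_congr rfl fun k _ => by ring
  subst hqn1
  set S := ∑ i, b i • l i with hS
  have hSqn : ⟪S, qn⟫_ℝ = ∑ i, b i * ⟪l i, qn⟫_ℝ := by
    rw [hS, sum_inner]
    exact Finset.sum_congr rfl fun i _ => real_inner_smul_left _ _ _
  have hSS : ⟪S, S⟫_ℝ = ∑ i, ∑ j, b i * b j * ⟪l i, l j⟫_ℝ := by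
    rw [hS, sum_inner]
    refine Finset.sum_congr rfl fun i _ => ?_
    rw [real_inner_smul_left, inner_sum, Finset.mul_sum]
    exact Finset.sum_congr rfl fun j _ => by rw [real_inner_smul_right]; ring
  have hnorm : ‖qn + Δt • S‖ ^ 2 =
      ‖qn‖ ^ 2 + 2 * Δt * ⟪S, qn⟫_ℝ + Δt ^ 2 * ⟪S, S⟫_ℝ := by
    rw [← real_inner_self_eq_norm_sq, ← real_inner_self_eq_norm_sq]
    simp only [inner_add_add_self, real_inner_smul_left, real_inner_smul_right,
      real_inner_comm (Δt • S) qn]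
    ring
  have hRHS : ∑ i, b i * ⟪l i, Q i⟫_ℝ =
      ⟪S, qn⟫_ℝ + Δt * ∑ i, ∑ j, b i * a i j * ⟪l i, l j⟫_ℝ := by
    rw [hSqn, Finset.mul_sum, ← Finset.sum_add_distrib]
    refine Finset.sum_congr rfl fun i _ => ?_
    rw [hQ i, inner_add_right, real_inner_smul_right, inner_sum, Finset.mul_sum,
      Finset.mul_sum]
    rw [mul_add]
    congr 1
    rw [Finset.mul_sum]
    exact Finset.sum_congr rfl fun j _ => by rw [real_inner_smul_right]; ring
  have hsymm : ∑ i, ∑ j, b j * a j i * ⟪l i, l j⟫_ℝ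
      = ∑ i, ∑ j, b i * a i j * ⟪l i, l j⟫_ℝ := by
    rw [Finset.sum_comm]
    exact Finset.sum_congr rfl fun i _ => Finset.sum_congr rfl fun j _ => by
      rw [real_inner_comm (l j) (l i)]
  have hsplit : ∑ i, ∑ j, (b i * a i j + b j * a j i - b i * b j) * ⟪l i, l j⟫_ℝ
      = 2 * (∑ i, ∑ j, b i * a i j * ⟪l i, l j⟫_ℝ)
        - ∑ i, ∑ j, b i * b j * ⟪l i, l j⟫_ℝ := by
    have expand : ∀ i j : Fin s,
        (b i * a i j + b j * a j i - b i * b j) * ⟪l i, l j⟫_ℝ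
        = (b i * a i j * ⟪l i, l j⟫_ℝ + b j * a j i * ⟪l i, l j⟫_ℝ)
          - b i * b j * ⟪l i, l j⟫_ℝ := fun i j => by ring
    simp only [expand, Finset.sum_sub_distrib, Finset.sum_add_distrib]
    rw [hsymm]
    ring
  have hfin := mul_nonneg (sq_nonneg Δt) key
  rw [hnorm, hRHS]
  nlinarith [hfin, hsplit, hSS]
end

section
/- Let V and W be finite-dimensional real inner product spaces, L : V → V a self-adjoint positive semi-definite linear operator, and D_1, …, D_s : V → W linear maps with adjoints D_i*. Let (a_{ij}), (b_i) be real Runge–Kutta coefficients, define M_{ij} = b_i a_{ij} + b_j a_{ji} − b_i b_j and assume Σ_{i,j} M_{ij} x_i x_j ≥ 0 for all x ∈ ℝ^s. Given Φⁿ ∈ V, qⁿ ∈ W, Δt ∈ ℝ, and k_1,…,k_s ∈ V, define l_i = D_i k_i, Φ_i = Φⁿ + Δt Σ_j a_{ij} k_j, Q_i = qⁿ + Δt Σ_j a_{ij} l_j, Φ^{n+1} = Φⁿ + Δt Σ_i b_i k_i, q^{n+1} = qⁿ + Δt Σ_i b_i l_i, μ_i = L Φ_i + 2 D_i* Q_i,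 and the discrete energy ℱ(Φ, q) = (1/2)⟨Φ, LΦ⟩ + ‖q‖². Then ℱ(Φ^{n+1}, q^{n+1}) − ℱ(Φⁿ, qⁿ) ≤ Δt Σ_{i=1}^s b_i ⟨μ_i, k_i⟩. -/
open scoped InnerProductSpace BigOperators

lemma psd_contraction {V : Type*} [AddCommGroup V] [Module ℝ V] {s : ℕ}
    (M : Fin s → Fin s → ℝ) (hMsym : ∀ i j, M i j = M j i)
    (hM : ∀ x : Fin s → ℝ, 0 ≤ ∑ i, ∑ j, M i j * x i * x j)
    (B : V →ₗ[ℝ] V →ₗ[ℝ] ℝ) (hB : ∀ v, 0 ≤ B v v) (v : Fin s → V) :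
    0 ≤ ∑ i, ∑ j, M i j * B (v i) (v j) := by
  have hPSD : (Matrix.of M).PosSemidef := by
    constructor
    · ext i j
      simp [Matrix.conjTranspose_apply, hMsym j i]
    · intro x
      have h := hM x
      simpa [dotProduct, Matrix.mulVec, Finsupp.sum_fintype, Finset.mul_sum, mul_comm, mul_assoc,
        mul_left_comm] using h
  obtain ⟨C, hC⟩ : ∃ C : Matrix (Fin s) (Fin s) ℝ, Matrix.of M = C.conjTranspose * C := by
    open scoped MatrixOrder in
    exact CStarAlgebra.nonneg_iff_eq_star_mul_self.mp hPSD.nonneg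
  have hMe : ∀ i j, M i j = ∑ m, C m i * C m j := by
    intro i j
    have h := congrFun (congrFun hC i) j
    simpa [Matrix.mul_apply, Matrix.conjTranspose_apply] using h
  have lhs_eq : ∑ i, ∑ j, M i j * B (v i) (v j)
      = ∑ m, ∑ i, ∑ j, C m i * C m j * B (v i) (v j) := by
    have step : ∀ i : Fin s, ∑ j, M i j * B (v i) (v j)
        = ∑ m, ∑ j, C m i * C m j * B (v i) (v j) := by
      intro i
      rw [show (∑ j, M i j * B (v i) (v j))
          = ∑ j, ∑ m, C m i * C m j * B (v i) (v j) from
        Finset.sum_congr rfl fun j _ => by rw [hMe i j, Finset.sum_mul]]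
      exact Finset.sum_comm
    simp_rw [step]
    exact Finset.sum_comm
  have rhs_eq : ∀ m, B (∑ i, C m i • v i) (∑ j, C m j • v j)
      = ∑ i, ∑ j, C m i * C m j * B (v i) (v j) := by
    intro m
    simp only [map_sum, map_smul, LinearMap.sum_apply, LinearMap.smul_apply, smul_eq_mul]
    rw [Finset.sum_comm]
    refine Finset.sum_congr rfl fun i _ => ?_
    rw [Finset.mul_sum]
    exact Finset.sum_congr rfl fun j _ => by ring
  rw [lhs_eq]
  refine Finset.sum_nonneg fun m _ => ?_
  rw [← rhs_eq m]
  exact hB _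

/-- Discrete energy inequality for the quadratized energy
`ℱ(Φ, q) = (1/2)⟪Φ, LΦ⟫ + ‖q‖²` along one step of the LEQRK scheme. -/
theorem leqrk_energy_inequality
    {V W : Type*} [NormedAddCommGroup V] [InnerProductSpace ℝ V]
    [FiniteDimensional ℝ V]
    [NormedAddCommGroup W] [InnerProductSpace ℝ W] [FiniteDimensional ℝ W]
    (L : V →ₗ[ℝ] V) (hLsym : ∀ u v : V, ⟪L u, v⟫_ℝ = ⟪u, L v⟫_ℝ)
    (hLpos : ∀ u : V, 0 ≤ ⟪L u, u⟫_ℝ)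
    (s : ℕ) (hs : 1 ≤ s) (a : Fin s → Fin s → ℝ) (b : Fin s → ℝ)
    (hM : ∀ x : Fin s → ℝ,
      0 ≤ ∑ i, ∑ j, (b i * a i j + b j * a j i - b i * b j) * x i * x j)
    (D : Fin s → V →ₗ[ℝ] W)
    (Φn : V) (qn : W) (Δt : ℝ) (k : Fin s → V)
    (l : Fin s → W) (hl : ∀ i, l i = D i (k i))
    (Φ : Fin s → V) (hΦ : ∀ i, Φ i = Φn + Δt • ∑ j, a i j • k j)
    (Q : Fin s → W) (hQ : ∀ i, Q i = qn + Δt • ∑ j, a i j • l j)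
    (Φn1 : V) (hΦn1 : Φn1 = Φn + Δt • ∑ i, b i • k i)
    (qn1 : W) (hqn1 : qn1 = qn + Δt • ∑ i, b i • l i)
    (μ : Fin s → V)
    (hμ : ∀ i, μ i = L (Φ i) + (2 : ℝ) • (LinearMap.adjoint (D i)) (Q i)) :
    ((1/2) * ⟪Φn1, L Φn1⟫_ℝ + ‖qn1‖ ^ 2) - ((1/2) * ⟪Φn, L Φn⟫_ℝ + ‖qn‖ ^ 2)
      ≤ Δt * ∑ i, b i * ⟪μ i, k i⟫_ℝ := by
  classical
  have hαsym : ∀ i j : Fin s, ⟪L (k i), k j⟫_ℝ = ⟪L (k j), k i⟫_ℝ := by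
    intro i j
    rw [hLsym, real_inner_comm]
  have hβsym : ∀ i j : Fin s, ⟪l i, l j⟫_ℝ = ⟪l j, l i⟫_ℝ :=
    fun i j => real_inner_comm _ _
  -- expansion of μ·k
  have h3 : ∀ i, ⟪μ i, k i⟫_ℝ
      = ⟪L Φn, k i⟫_ℝ + Δt * ∑ j, a i j * ⟪L (k j), k i⟫_ℝ
        + (2 * ⟪qn, l i⟫_ℝ + 2 * (Δt * ∑ j, a i j * ⟪l j, l i⟫_ℝ)) := by
    intro i
    rw [hμ i, hΦ i, hQ i, inner_add_left]
    congr 1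
    · rw [show L (Φn + Δt • ∑ j, a i j • k j)
          = L Φn + Δt • ∑ j, a i j • L (k j) by
        simp [Finset.smul_sum]]
      rw [inner_add_left, real_inner_smul_left, sum_inner]
      simp [real_inner_smul_left]
    · rw [real_inner_smul_left, LinearMap.adjoint_inner_left, ← hl i,
        inner_add_left, real_inner_smul_left, sum_inner]
      simp only [real_inner_smul_left]
      ring
  -- expansion of the new Φ energy
  have h1 : ⟪Φn1, L Φn1⟫_ℝ
      = ⟪Φn, L Φn⟫_ℝ + 2 * (Δt * ∑ i, b i * ⟪L Φn, k i⟫_ℝ)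
        + Δt ^ 2 * ∑ i, ∑ j, b i * b j * ⟪L (k i), k j⟫_ℝ := by
    rw [hΦn1]
    rw [show L (Φn + Δt • ∑ i, b i • k i)
        = L Φn + Δt • ∑ i, b i • L (k i) by simp [Finset.smul_sum]]
    rw [inner_add_left, inner_add_right, inner_add_right]
    have e1 : ⟪Φn, Δt • ∑ i, b i • L (k i)⟫_ℝ = Δt * ∑ i, b i * ⟪L Φn, k i⟫_ℝ := by
      rw [real_inner_smul_right, inner_sum]
      congr 1
      refine Finset.sum_congr rfl fun i _ => ?_
      rw [real_inner_smul_right, ← hLsym]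
    have e2 : ⟪Δt • ∑ i, b i • k i, L Φn⟫_ℝ = Δt * ∑ i, b i * ⟪L Φn, k i⟫_ℝ := by
      rw [real_inner_smul_left, sum_inner]
      congr 1
      refine Finset.sum_congr rfl fun i _ => ?_
      rw [real_inner_smul_left, real_inner_comm]
    have e3 : ⟪Δt • ∑ i, b i • k i, Δt • ∑ j, b j • L (k j)⟫_ℝ
        = Δt ^ 2 * ∑ i, ∑ j, b i * b j * ⟪L (k i), k j⟫_ℝ := by
      rw [real_inner_smul_left, real_inner_smul_right, sum_inner, ← mul_assoc, ← sq,
        Finset.mul_sum, Finset.mul_sum]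
      refine Finset.sum_congr rfl fun i _ => ?_
      rw [inner_sum, Finset.mul_sum, Finset.mul_sum]
      refine Finset.sum_congr rfl fun j _ => ?_
      rw [real_inner_smul_left, real_inner_smul_right, ← hLsym (k i) (k j)]
      ring
    rw [e1, e2, e3]
    ring
  -- expansion of the new q energy
  have h2 : ‖qn1‖ ^ 2 = ‖qn‖ ^ 2 + 2 * (Δt * ∑ i, b i * ⟪qn, l i⟫_ℝ)
      + Δt ^ 2 * ∑ i, ∑ j, b i * b j * ⟪l i, l j⟫_ℝ := by
    rw [hqn1, norm_add_sq_real]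
    have e1 : ⟪qn, Δt • ∑ i, b i • l i⟫_ℝ = Δt * ∑ i, b i * ⟪qn, l i⟫_ℝ := by
      rw [real_inner_smul_right, inner_sum]
      simp [real_inner_smul_right]
    have e2 : ‖Δt • ∑ i, b i • l i‖ ^ 2
        = Δt ^ 2 * ∑ i, ∑ j, b i * b j * ⟪l i, l j⟫_ℝ := by
      rw [← real_inner_self_eq_norm_sq, real_inner_smul_left, real_inner_smul_right,
        sum_inner, ← mul_assoc, ← sq, Finset.mul_sum, Finset.mul_sum]
      refine Finset.sum_congr rfl fun i _ => ?_
      rw [inner_sum, Finset.mul_sum, Finset.mul_sum]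
      refine Finset.sum_congr rfl fun j _ => ?_
      rw [real_inner_smul_left, real_inner_smul_right]
      ring
    rw [e1, e2]
  -- positivity of the two contraction terms
  set M : Fin s → Fin s → ℝ := fun i j => b i * a i j + b j * a j i - b i * b j
    with hMdef
  have hMsym : ∀ i j, M i j = M j i := by intro i j; simp only [hMdef]; ring
  have hMα : 0 ≤ ∑ i, ∑ j, M i j * ⟪L (k i), k j⟫_ℝ := by
    refine psd_contraction M hMsym hM
      (LinearMap.mk₂ ℝ (fun u v => ⟪L u, v⟫_ℝ)
        (fun u u' v => by simp [inner_add_left])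
        (fun c u v => by simp [real_inner_smul_left])
        (fun u v v' => by simp [inner_add_right])
        (fun c u v => by simp [real_inner_smul_right]))
      (fun v => hLpos v) k
  have hMβ : 0 ≤ ∑ i, ∑ j, M i j * ⟪l i, l j⟫_ℝ := by
    refine psd_contraction M hMsym hM
      (LinearMap.mk₂ ℝ (fun u v => ⟪u, v⟫_ℝ)
        (fun u u' v => by simp [inner_add_left])
        (fun c u v => by simp [real_inner_smul_left])
        (fun u v v' => by simp [inner_add_right])
        (fun c u v => by simp [real_inner_smul_right]))
      (fun v => real_inner_self_nonneg) l
  -- swap identities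
  have hswapα : 2 * ∑ i, ∑ j, b i * a i j * ⟪L (k j), k i⟫_ℝ
      = ∑ i, ∑ j, M i j * ⟪L (k i), k j⟫_ℝ
        + ∑ i, ∑ j, b i * b j * ⟪L (k i), k j⟫_ℝ := by
    have hswap : ∑ i, ∑ j, b i * a i j * ⟪L (k j), k i⟫_ℝ
        = ∑ i, ∑ j, b j * a j i * ⟪L (k i), k j⟫_ℝ := Finset.sum_comm
    have hsame : ∑ i, ∑ j, b i * a i j * ⟪L (k j), k i⟫_ℝ
        = ∑ i, ∑ j, b i * a i j * ⟪L (k i), k j⟫_ℝ := by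
      refine Finset.sum_congr rfl fun i _ => Finset.sum_congr rfl fun j _ => ?_
      rw [hαsym j i]
    rw [two_mul]
    nth_rewrite 1 [hsame]
    rw [hswap]
    rw [← Finset.sum_add_distrib, ← Finset.sum_add_distrib]
    refine Finset.sum_congr rfl fun i _ => ?_
    rw [← Finset.sum_add_distrib, ← Finset.sum_add_distrib]
    refine Finset.sum_congr rfl fun j _ => ?_
    simp only [hMdef]
    ring
  have hswapβ : 2 * ∑ i, ∑ j, b i * a i j * ⟪l j, l i⟫_ℝ
      = ∑ i, ∑ j, M i j * ⟪l i, l j⟫_ℝ + ∑ i, ∑ j, b i * b j * ⟪l i, l j⟫_ℝ := by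
    have hswap : ∑ i, ∑ j, b i * a i j * ⟪l j, l i⟫_ℝ
        = ∑ i, ∑ j, b j * a j i * ⟪l i, l j⟫_ℝ := Finset.sum_comm
    have hsame : ∑ i, ∑ j, b i * a i j * ⟪l j, l i⟫_ℝ
        = ∑ i, ∑ j, b i * a i j * ⟪l i, l j⟫_ℝ := by
      refine Finset.sum_congr rfl fun i _ => Finset.sum_congr rfl fun j _ => ?_
      rw [hβsym j i]
    rw [two_mul]
    nth_rewrite 1 [hsame]
    rw [hswap]
    rw [← Finset.sum_add_distrib, ← Finset.sum_add_distrib]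
    refine Finset.sum_congr rfl fun i _ => ?_
    rw [← Finset.sum_add_distrib, ← Finset.sum_add_distrib]
    refine Finset.sum_congr rfl fun j _ => ?_
    simp only [hMdef]
    ring
  -- rewrite the right-hand side
  have hRHS : ∑ i, b i * ⟪μ i, k i⟫_ℝ
      = ∑ i, b i * ⟪L Φn, k i⟫_ℝ
        + Δt * ∑ i, ∑ j, b i * a i j * ⟪L (k j), k i⟫_ℝ
        + 2 * ∑ i, b i * ⟪qn, l i⟫_ℝ
        + 2 * Δt * ∑ i, ∑ j, b i * a i j * ⟪l j, l i⟫_ℝ := by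
    have expand : ∀ i, b i * ⟪μ i, k i⟫_ℝ
        = b i * ⟪L Φn, k i⟫_ℝ
          + Δt * ∑ j, b i * (a i j * ⟪L (k j), k i⟫_ℝ)
          + 2 * (b i * ⟪qn, l i⟫_ℝ)
          + 2 * Δt * ∑ j, b i * (a i j * ⟪l j, l i⟫_ℝ) := by
      intro i
      rw [← Finset.mul_sum, ← Finset.mul_sum, h3 i]
      ring
    simp_rw [expand]
    rw [Finset.sum_add_distrib, Finset.sum_add_distrib, Finset.sum_add_distrib,
      ← Finset.mul_sum, ← Finset.mul_sum, ← Finset.mul_sum]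
    congr 2
    · congr 2
      refine Finset.sum_congr rfl fun i _ => Finset.sum_congr rfl fun j _ => by ring
    · refine Finset.sum_congr rfl fun i _ => Finset.sum_congr rfl fun j _ => by ring
  rw [h1, h2, hRHS]
  nlinarith [mul_nonneg (sq_nonneg Δt) hMα, mul_nonneg (sq_nonneg Δt) hMβ,
    hswapα, hswapβ, sq_nonneg Δt]
end

section
/- (Energy stability of the LEQRK scheme, Theorem 3.1, fully discrete form.) Let V and W be finite-dimensional real inner product spaces, L : V → V self-adjoint positive semi-definite, G : V → V linear with ⟨v, Gv⟩ ≤ 0 for all v ∈ V, and D_1, …, D_s : V → W linear maps with adjoints D_i*. Let (a_{ij}), (b_i) be real Runge–Kutta coefficients satisfying the algebraic stability condition: b_i ≥ 0 for all i, and the matrix M_{ij} = b_i a_{ij} + b_j a_{ji} − b_i b_j is positive semi-definite. Let Δt ≥ 0, Φⁿ ∈ V, qⁿ ∈ W, and suppose Φ_i ∈ V, Q_i ∈ W, k_i ∈ V, l_i ∈ W satisfy, for i = 1, …, s: Φ_i = Φⁿ + Δt Σ_j a_{ij} k_j, Q_i = qⁿ + Δt Σ_j a_{ij} l_j, k_i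 = G(L Φ_i + 2 D_i* Q_i), l_i = D_i k_i; and set Φ^{n+1} = Φⁿ + Δt Σ_i b_i k_i, q^{n+1} = qⁿ + Δt Σ_i b_i l_i. Then (1/2)⟨Φ^{n+1}, LΦ^{n+1}⟩ + ‖q^{n+1}‖² ≤ (1/2)⟨Φⁿ, LΦⁿ⟩ + ‖qⁿ‖². -/
open scoped InnerProductSpace BigOperators

private lemma leqrk_aux_psd {s n : ℕ} (M : Fin s → Fin s → ℝ)
    (hM : ∀ x : Fin s → ℝ, 0 ≤ ∑ i, ∑ j, M i j * x i * x j)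
    (lam : Fin n → ℝ) (hlam : ∀ m, 0 ≤ lam m)
    (y : Fin s → Fin n → ℝ) :
    0 ≤ ∑ i, ∑ j, M i j * ∑ m, lam m * (y i m * y j m) := by
  have key : (∑ i, ∑ j, M i j * ∑ m, lam m * (y i m * y j m))
      = ∑ m, lam m * ∑ i, ∑ j, M i j * y i m * y j m := by
    have h1 : (∑ i, ∑ j, M i j * ∑ m, lam m * (y i m * y j m))
        = ∑ i, ∑ j, ∑ m, lam m * (M i j * y i m * y j m) := by
      refine Finset.sum_congr rfl fun i _ => Finset.sum_congr rfl fun j _ => ?_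
      rw [Finset.mul_sum]; exact Finset.sum_congr rfl fun m _ => by ring
    rw [h1]
    have h2 : (∑ i, ∑ j, ∑ m, lam m * (M i j * y i m * y j m))
        = ∑ i, ∑ m, ∑ j, lam m * (M i j * y i m * y j m) := by
      exact Finset.sum_congr rfl fun i _ => Finset.sum_comm
    rw [h2, Finset.sum_comm]
    refine Finset.sum_congr rfl fun m _ => ?_
    rw [Finset.mul_sum]
    exact Finset.sum_congr rfl fun i _ => by rw [Finset.mul_sum]
  rw [key]
  exact Finset.sum_nonneg fun m _ => mul_nonneg (hlam m) (hM fun i => y i m)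

private lemma leqrk_psd_quadform {V : Type*} [NormedAddCommGroup V]
    [InnerProductSpace ℝ V] [FiniteDimensional ℝ V]
    (L : V →ₗ[ℝ] V) (hLsym : ∀ u v : V, ⟪L u, v⟫_ℝ = ⟪u, L v⟫_ℝ)
    (hLpos : ∀ u : V, 0 ≤ ⟪L u, u⟫_ℝ)
    {s : ℕ} (M : Fin s → Fin s → ℝ)
    (hM : ∀ x : Fin s → ℝ, 0 ≤ ∑ i, ∑ j, M i j * x i * x j)
    (k : Fin s → V) :
    0 ≤ ∑ i, ∑ j, M i j * ⟪k i, L (k j)⟫_ℝ := by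
  have hsym : L.IsSymmetric := fun u v => hLsym u v
  have hfin : Module.finrank ℝ V = Module.finrank ℝ V := rfl
  set e := hsym.eigenvectorBasis hfin with he
  set lam := hsym.eigenvalues hfin with hlamdef
  have happ : ∀ m, L (e m) = lam m • e m := fun m => hsym.apply_eigenvectorBasis hfin m
  have hlam : ∀ m, 0 ≤ lam m := by
    intro m
    have h := hLpos (e m)
    rw [happ m, real_inner_smul_left, real_inner_self_eq_norm_sq,
      e.orthonormal.1 m] at h
    simpa using h
  have hrep : ∀ u v : V, ⟪u, L v⟫_ℝ = ∑ m, lam m * (⟪u, e m⟫_ℝ * ⟪v, e m⟫_ℝ) := by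
    intro u v
    conv_lhs => rw [← e.sum_repr' v]
    rw [map_sum, inner_sum]
    refine Finset.sum_congr rfl fun m _ => ?_
    rw [map_smul, happ m, smul_smul, real_inner_smul_right, real_inner_comm (e m) v]
    ring
  have : (∑ i, ∑ j, M i j * ⟪k i, L (k j)⟫_ℝ)
      = ∑ i, ∑ j, M i j * ∑ m, lam m * (⟪k i, e m⟫_ℝ * ⟪k j, e m⟫_ℝ) := by
    refine Finset.sum_congr rfl fun i _ => Finset.sum_congr rfl fun j _ => ?_
    rw [hrep]
  rw [this]
  exact leqrk_aux_psd M hM lam hlam _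

/-- Theorem 3.1 (fully discrete form): the algebraically stable `s`-stage LEQRK
scheme is unconditionally energy stable: `ℱ(Φ^{n+1}, q^{n+1}) ≤ ℱ(Φⁿ, qⁿ)` where
`ℱ(Φ, q) = (1/2)⟪Φ, LΦ⟫ + ‖q‖²`. -/
theorem leqrk_unconditional_energy_stability
    {V W : Type*} [NormedAddCommGroup V] [InnerProductSpace ℝ V]
    [FiniteDimensional ℝ V]
    [NormedAddCommGroup W] [InnerProductSpace ℝ W] [FiniteDimensional ℝ W]
    (L : V →ₗ[ℝ] V) (hLsym : ∀ u v : V, ⟪L u, v⟫_ℝ = ⟪u, L v⟫_ℝ)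
    (hLpos : ∀ u : V, 0 ≤ ⟪L u, u⟫_ℝ)
    (G : V →ₗ[ℝ] V) (hG : ∀ v : V, ⟪v, G v⟫_ℝ ≤ 0)
    (s : ℕ) (hs : 1 ≤ s) (a : Fin s → Fin s → ℝ) (b : Fin s → ℝ)
    (hb : ∀ i, 0 ≤ b i)
    (hM : ∀ x : Fin s → ℝ,
      0 ≤ ∑ i, ∑ j, (b i * a i j + b j * a j i - b i * b j) * x i * x j)
    (D : Fin s → V →ₗ[ℝ] W)
    (Δt : ℝ) (hΔt : 0 ≤ Δt) (Φn : V) (qn : W)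
    (Φ : Fin s → V) (Q : Fin s → W) (k : Fin s → V) (l : Fin s → W)
    (hΦ : ∀ i, Φ i = Φn + Δt • ∑ j, a i j • k j)
    (hQ : ∀ i, Q i = qn + Δt • ∑ j, a i j • l j)
    (hk : ∀ i, k i = G (L (Φ i) + (2 : ℝ) • (LinearMap.adjoint (D i)) (Q i)))
    (hl : ∀ i, l i = D i (k i))
    (Φn1 : V) (hΦn1 : Φn1 = Φn + Δt • ∑ i, b i • k i)
    (qn1 : W) (hqn1 : qn1 = qn + Δt • ∑ i, b i • l i) :
    (1/2) * ⟪Φn1, L Φn1⟫_ℝ + ‖qn1‖ ^ 2 ≤ (1/2) * ⟪Φn, L Φn⟫_ℝ + ‖qn‖ ^ 2 := by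
  classical
  set M : Fin s → Fin s → ℝ := fun i j => b i * a i j + b j * a j i - b i * b j with hMdef
  set c : Fin s → Fin s → ℝ := fun i j => ⟪k i, L (k j)⟫_ℝ with hcdef
  set d : Fin s → Fin s → ℝ := fun i j => ⟪l i, l j⟫_ℝ with hddef
  have hcsym : ∀ i j, c i j = c j i := by
    intro i j
    simp only [hcdef]
    rw [← hLsym, real_inner_comm]
  have hdsym : ∀ i j, d i j = d j i := fun i j => real_inner_comm _ _
  -- expansion of the Φ-energy
  have e1 : ⟪Φn1, L Φn1⟫_ℝ
      = ⟪Φn, L Φn⟫_ℝ + 2 * Δt * (∑ i, b i * ⟪L Φn, k i⟫_ℝ)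
        + Δt ^ 2 * ∑ i, ∑ j, b i * b j * c i j := by
    rw [hΦn1]
    rw [map_add, inner_add_left, inner_add_right, inner_add_right]
    have h1 : ⟪Φn, L (Δt • ∑ i, b i • k i)⟫_ℝ = Δt * ∑ i, b i * ⟪L Φn, k i⟫_ℝ := by
      rw [← hLsym, real_inner_smul_right, inner_sum]
      simp only [real_inner_smul_right]
    have h2 : ⟪Δt • ∑ i, b i • k i, L Φn⟫_ℝ = Δt * ∑ i, b i * ⟪L Φn, k i⟫_ℝ := by
      rw [real_inner_smul_left, sum_inner]
      congr 1
      refine Finset.sum_congr rfl fun i _ => ?_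
      rw [real_inner_smul_left, real_inner_comm]
    have h3 : ⟪Δt • ∑ i, b i • k i, L (Δt • ∑ i, b i • k i)⟫_ℝ
        = Δt ^ 2 * ∑ i, ∑ j, b i * b j * c i j := by
      rw [map_smul, real_inner_smul_left, real_inner_smul_right, sum_inner]
      rw [map_sum]
      have : (∑ i, ⟪b i • k i, ∑ j, L (b j • k j)⟫_ℝ)
          = ∑ i, ∑ j, b i * b j * c i j := by
        refine Finset.sum_congr rfl fun i _ => ?_
        rw [real_inner_smul_left, inner_sum, Finset.mul_sum]
        refine Finset.sum_congr rfl fun j _ => ?_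
        rw [map_smul, real_inner_smul_right]
        simp only [hcdef]; ring
      rw [this]; ring
    rw [h1, h2, h3]; ring
  -- expansion of the q-energy
  have e2 : ‖qn1‖ ^ 2
      = ‖qn‖ ^ 2 + 2 * Δt * (∑ i, b i * ⟪qn, l i⟫_ℝ)
        + Δt ^ 2 * ∑ i, ∑ j, b i * b j * d i j := by
    rw [← real_inner_self_eq_norm_sq, ← real_inner_self_eq_norm_sq, hqn1]
    rw [inner_add_left, inner_add_right, inner_add_right]
    have h1 : ⟪qn, Δt • ∑ i, b i • l i⟫_ℝ = Δt * ∑ i, b i * ⟪qn, l i⟫_ℝ := by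
      rw [real_inner_smul_right, inner_sum]
      simp only [real_inner_smul_right]
    have h2 : ⟪Δt • ∑ i, b i • l i, qn⟫_ℝ = Δt * ∑ i, b i * ⟪qn, l i⟫_ℝ := by
      rw [real_inner_smul_left, sum_inner]
      congr 1
      refine Finset.sum_congr rfl fun i _ => ?_
      rw [real_inner_smul_left, real_inner_comm]
    have h3 : ⟪Δt • ∑ i, b i • l i, Δt • ∑ i, b i • l i⟫_ℝ
        = Δt ^ 2 * ∑ i, ∑ j, b i * b j * d i j := by
      rw [real_inner_smul_left, real_inner_smul_right, sum_inner]
      have : (∑ i, ⟪b i • l i, ∑ j, b j • l j⟫_ℝ)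
          = ∑ i, ∑ j, b i * b j * d i j := by
        refine Finset.sum_congr rfl fun i _ => ?_
        rw [real_inner_smul_left, inner_sum, Finset.mul_sum]
        refine Finset.sum_congr rfl fun j _ => ?_
        rw [real_inner_smul_right]
        simp only [hddef]; ring
      rw [this]; ring
    rw [h1, h2, h3]; ring
  -- stage expansions
  have st1 : ∀ i, ⟪L (Φ i), k i⟫_ℝ = ⟪L Φn, k i⟫_ℝ + Δt * ∑ j, a i j * c i j := by
    intro i
    rw [hΦ i, map_add, inner_add_left]
    congr 1
    rw [map_smul, real_inner_smul_left, map_sum, sum_inner]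
    congr 1
    refine Finset.sum_congr rfl fun j _ => ?_
    rw [map_smul, real_inner_smul_left, real_inner_comm]
  have st2 : ∀ i, ⟪Q i, l i⟫_ℝ = ⟪qn, l i⟫_ℝ + Δt * ∑ j, a i j * d i j := by
    intro i
    rw [hQ i, inner_add_left]
    congr 1
    rw [real_inner_smul_left, sum_inner]
    congr 1
    refine Finset.sum_congr rfl fun j _ => ?_
    rw [real_inner_smul_left, real_inner_comm]
  -- dissipation of each stage
  have hdiss : ∀ i, ⟪L (Φ i), k i⟫_ℝ + 2 * ⟪Q i, l i⟫_ℝ ≤ 0 := by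
    intro i
    have hadj : ⟪Q i, l i⟫_ℝ = ⟪(LinearMap.adjoint (D i)) (Q i), k i⟫_ℝ := by
      rw [hl i, LinearMap.adjoint_inner_left]
    have : ⟪L (Φ i), k i⟫_ℝ + 2 * ⟪Q i, l i⟫_ℝ
        = ⟪L (Φ i) + (2 : ℝ) • (LinearMap.adjoint (D i)) (Q i),
            G (L (Φ i) + (2 : ℝ) • (LinearMap.adjoint (D i)) (Q i))⟫_ℝ := by
      rw [← hk i, inner_add_left, real_inner_smul_left, hadj]
    rw [this]
    exact hG _
  -- symmetry-based sum swaps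
  have hswap_c : (∑ i, ∑ j, b j * a j i * c i j) = ∑ i, ∑ j, b i * a i j * c i j := by
    rw [Finset.sum_comm]
    refine Finset.sum_congr rfl fun i _ => Finset.sum_congr rfl fun j _ => ?_
    rw [hcsym]
  have hswap_d : (∑ i, ∑ j, b j * a j i * d i j) = ∑ i, ∑ j, b i * a i j * d i j := by
    rw [Finset.sum_comm]
    refine Finset.sum_congr rfl fun i _ => Finset.sum_congr rfl fun j _ => ?_
    rw [hdsym]
  -- PSD terms
  have hMc : 0 ≤ ∑ i, ∑ j, M i j * c i j := leqrk_psd_quadform L hLsym hLpos M hM k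
  have hMd : 0 ≤ ∑ i, ∑ j, M i j * d i j := by
    have := leqrk_psd_quadform (LinearMap.id : W →ₗ[ℝ] W)
      (fun u v => by simp) (fun u => real_inner_self_nonneg) M hM l
    simpa [hddef] using this
  -- the stage dissipation sum
  have hS : Δt * (∑ i, b i * (⟪L (Φ i), k i⟫_ℝ + 2 * ⟪Q i, l i⟫_ℝ)) ≤ 0 := by
    apply mul_nonpos_of_nonneg_of_nonpos hΔt
    exact Finset.sum_nonpos fun i _ => mul_nonpos_of_nonneg_of_nonpos (hb i) (hdiss i)
  -- master energy identity
  have master :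
      (1/2) * ⟪Φn1, L Φn1⟫_ℝ + ‖qn1‖ ^ 2
      = (1/2) * ⟪Φn, L Φn⟫_ℝ + ‖qn‖ ^ 2
        + Δt * (∑ i, b i * (⟪L (Φ i), k i⟫_ℝ + 2 * ⟪Q i, l i⟫_ℝ))
        - Δt ^ 2 / 2 * (∑ i, ∑ j, M i j * c i j)
        - Δt ^ 2 * (∑ i, ∑ j, M i j * d i j) := by
    rw [e1, e2]
    have hexp : (∑ i, b i * (⟪L (Φ i), k i⟫_ℝ + 2 * ⟪Q i, l i⟫_ℝ))
        = (∑ i, b i * ⟪L Φn, k i⟫_ℝ) + Δt * (∑ i, ∑ j, b i * a i j * c i j)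
          + 2 * (∑ i, b i * ⟪qn, l i⟫_ℝ) + 2 * Δt * (∑ i, ∑ j, b i * a i j * d i j) := by
      have hterm : ∀ i, b i * (⟪L (Φ i), k i⟫_ℝ + 2 * ⟪Q i, l i⟫_ℝ)
          = b i * ⟪L Φn, k i⟫_ℝ + Δt * ∑ j, b i * a i j * c i j
              + 2 * (b i * ⟪qn, l i⟫_ℝ) + 2 * Δt * ∑ j, b i * a i j * d i j := by
        intro i
        have hc' : (∑ j, b i * a i j * c i j) = b i * ∑ j, a i j * c i j := by
          rw [Finset.mul_sum]
          exact Finset.sum_congr rfl fun j _ => mul_assoc _ _ _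
        have hd' : (∑ j, b i * a i j * d i j) = b i * ∑ j, a i j * d i j := by
          rw [Finset.mul_sum]
          exact Finset.sum_congr rfl fun j _ => mul_assoc _ _ _
        rw [st1 i, st2 i, hc', hd']
        ring
      rw [Finset.sum_congr rfl fun i _ => hterm i]
      simp only [Finset.sum_add_distrib, ← Finset.mul_sum]
    rw [hexp]
    have hMc_expand : (∑ i, ∑ j, M i j * c i j)
        = 2 * (∑ i, ∑ j, b i * a i j * c i j) - ∑ i, ∑ j, b i * b j * c i j := by
      have h1 : (∑ i, ∑ j, M i j * c i j)
          = (∑ i, ∑ j, b i * a i j * c i j) + (∑ i, ∑ j, b j * a j i * c i j)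
            - ∑ i, ∑ j, b i * b j * c i j := by
        simp only [hMdef]
        rw [← Finset.sum_add_distrib, ← Finset.sum_sub_distrib]
        refine Finset.sum_congr rfl fun i _ => ?_
        rw [← Finset.sum_add_distrib, ← Finset.sum_sub_distrib]
        exact Finset.sum_congr rfl fun j _ => by ring
      rw [h1, hswap_c]; ring
    have hMd_expand : (∑ i, ∑ j, M i j * d i j)
        = 2 * (∑ i, ∑ j, b i * a i j * d i j) - ∑ i, ∑ j, b i * b j * d i j := by
      have h1 : (∑ i, ∑ j, M i j * d i j)
          = (∑ i, ∑ j, b i * a i j * d i j) + (∑ i, ∑ j, b j * a j i * d i j)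
            - ∑ i, ∑ j, b i * b j * d i j := by
        simp only [hMdef]
        rw [← Finset.sum_add_distrib, ← Finset.sum_sub_distrib]
        refine Finset.sum_congr rfl fun i _ => ?_
        rw [← Finset.sum_add_distrib, ← Finset.sum_sub_distrib]
        exact Finset.sum_congr rfl fun j _ => by ring
      rw [h1, hswap_d]; ring
    rw [hMc_expand, hMd_expand]
    ring
  rw [master]
  have h1 : Δt ^ 2 / 2 * (∑ i, ∑ j, M i j * c i j) ≥ 0 :=
    mul_nonneg (by positivity) hMc
  have h2 : Δt ^ 2 * (∑ i, ∑ j, M i j * d i j) ≥ 0 :=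
    mul_nonneg (by positivity) hMd
  linarith
end

section
/- (Unique solvability of the LEQRK scheme, Theorem 3.2, fully discrete form.) Let V, W, U be finite-dimensional real inner product spaces, L : V → V self-adjoint positive semi-definite, B : V → U linear, and set G = −B*B (so G is negative semi-definite). Let (a_{ij})_{i,j=1}^s be real Runge–Kutta coefficients whose matrix is positive semi-definite as a quadratic form, i.e., Σ_{i,j} a_{ij} x_i x_j ≥ 0 for all x ∈ ℝ^s, and let Δt ≥ 0. Then for every Φⁿ ∈ V, qⁿ ∈ W and all linear maps D_1, …, D_s : V → W, there exists a unique tuple (Φ_i, Q_i, k_i, l_i)_{i=1}^s with Φ_i, k_i ∈ V and Q_i, l_i ∈ W satisfying, for all i: Φ_i = Φⁿ + Δt Σ_j a_{ij} k_j, Q_i = qⁿ + Δt Σ_j a_{ij} l_j, k_i = G(L Φ_i + 2 D_i* Q_i), l_i = D_i k_i. -/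
open scoped InnerProductSpace BigOperators

lemma gram_nonneg {s : ℕ} (a : Fin s → Fin s → ℝ)
    (hA : ∀ x : Fin s → ℝ, 0 ≤ ∑ i, ∑ j, a i j * x i * x j)
    {V : Type*} [NormedAddCommGroup V] [InnerProductSpace ℝ V]
    (P : V →ₗ[ℝ] V) (hP : ∀ u v : V, ⟪P u, v⟫_ℝ = ⟪u, P v⟫_ℝ)
    (hPpos : ∀ u : V, 0 ≤ ⟪P u, u⟫_ℝ) (v : Fin s → V) :
    0 ≤ ∑ i, ∑ j, a i j * ⟪P (v j), v i⟫_ℝ := by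
  set A : Matrix (Fin s) (Fin s) ℝ := Matrix.of fun i j => (a i j + a j i) / 2 with hAdef
  have hsymval : ∀ i j, ⟪P (v j), v i⟫_ℝ = ⟪P (v i), v j⟫_ℝ := by
    intro i j
    rw [hP, real_inner_comm]
  have hswap : ∀ c : Fin s → Fin s → ℝ,
      ∑ i, ∑ j, a j i * c i j = ∑ i, ∑ j, a i j * c j i := by
    intro c
    rw [Finset.sum_comm]
  have havg : ∀ c : Fin s → Fin s → ℝ, (∀ i j, c i j = c j i) →
      ∑ i, ∑ j, A i j * c j i = ∑ i, ∑ j, a i j * c j i := by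
    intro c hc
    have e1 : ∑ i, ∑ j, A i j * c j i
        = ((∑ i, ∑ j, a i j * c j i) + ∑ i, ∑ j, a j i * c j i) / 2 := by
      simp only [hAdef, Matrix.of_apply, Finset.sum_div, ← Finset.sum_add_distrib]
      congr 1; ext i; congr 1; ext j; ring
    have e2 : ∑ i, ∑ j, a j i * c j i = ∑ i, ∑ j, a i j * c j i := by
      rw [← hswap]
      congr 1; ext i; congr 1; ext j; rw [hc]
    rw [e1, e2]; ring
  have hApsd : A.PosSemidef := by
    refine Matrix.PosSemidef.of_dotProduct_mulVec_nonneg ?_ ?_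
    · ext i j
      simp only [Matrix.conjTranspose_apply, hAdef, Matrix.of_apply, star_trivial]
      ring
    · intro x
      have h1 : dotProduct (star x) (A.mulVec x) = ∑ i, ∑ j, A i j * x j * x i := by
        simp only [dotProduct, Matrix.mulVec, star_trivial, Finset.mul_sum]
        congr 1; ext i; congr 1; ext j; ring
      have h2 := havg (fun i j => x i * x j) (fun i j => mul_comm _ _)
      rw [h1]
      have h3 : ∑ i, ∑ j, A i j * x j * x i = ∑ i, ∑ j, a i j * x i * x j := by
        rw [show (∑ i, ∑ j, A i j * x j * x i) = ∑ i, ∑ j, A i j * (x j * x i) by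
          congr 1; ext i; congr 1; ext j; ring]
        rw [h2]
        congr 1; ext i; congr 1; ext j; ring
      rw [h3]; exact hA x
  obtain ⟨S, hSS, hSherm⟩ : ∃ S : Matrix (Fin s) (Fin s) ℝ, S * S = A ∧ S.IsHermitian := by
    open scoped MatrixOrder in
    exact ⟨CFC.sqrt A, CFC.sqrt_mul_sqrt_self A (Matrix.nonneg_iff_posSemidef.mpr hApsd),
      (Matrix.nonneg_iff_posSemidef.mp (CFC.sqrt_nonneg A)).1⟩
  have hSh : ∀ i j, S i j = S j i := by
    intro i j
    have h : S i j = S j i := by simpa using hSherm.apply j i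
    exact h
  have key : ∑ i, ∑ j, a i j * ⟪P (v j), v i⟫_ℝ
      = ∑ m, ⟪P (∑ j, S m j • v j), ∑ i, S m i • v i⟫_ℝ := by
    rw [← havg (fun i j => ⟪P (v i), v j⟫_ℝ) (fun i j => hsymval j i)]
    have hentry : ∀ i j, A i j = ∑ m, S m i * S m j := by
      intro i j
      rw [← hSS]
      simp [Matrix.mul_apply]
      congr 1; ext m; rw [hSh i m]
    calc ∑ i, ∑ j, A i j * ⟪P (v j), v i⟫_ℝ
        = ∑ i, ∑ j, ∑ m, S m i * S m j * ⟪P (v j), v i⟫_ℝ := by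
          congr 1; ext i; congr 1; ext j; rw [hentry, Finset.sum_mul]
      _ = ∑ m, ∑ i, ∑ j, S m i * S m j * ⟪P (v j), v i⟫_ℝ := by
          have h1 : ∀ i : Fin s, ∑ j, ∑ m, S m i * S m j * ⟪P (v j), v i⟫_ℝ
              = ∑ m, ∑ j, S m i * S m j * ⟪P (v j), v i⟫_ℝ := fun i => Finset.sum_comm
          simp_rw [h1]
          exact Finset.sum_comm
      _ = ∑ m, ⟪P (∑ j, S m j • v j), ∑ i, S m i • v i⟫_ℝ := by
          congr 1; ext m
          rw [map_sum, sum_inner]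
          simp only [inner_sum, LinearMap.map_smul, real_inner_smul_left, real_inner_smul_right,
            Finset.mul_sum]
          rw [Finset.sum_comm]
          congr 1; ext i; congr 1; ext j; ring
  rw [key]
  exact Finset.sum_nonneg fun m _ => hPpos _

/-- Theorem 3.2 (fully discrete form): when the Runge–Kutta coefficient matrix
`A = (aᵢⱼ)` has a nonnegative quadratic form and the mobility is `G = -B*B`,
the `s`-stage LEQRK scheme is uniquely solvable. -/
theorem leqrk_unique_solvability
    {V W U : Type*} [NormedAddCommGroup V] [InnerProductSpace ℝ V]
    [FiniteDimensional ℝ V]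
    [NormedAddCommGroup W] [InnerProductSpace ℝ W] [FiniteDimensional ℝ W]
    [NormedAddCommGroup U] [InnerProductSpace ℝ U] [FiniteDimensional ℝ U]
    (L : V →ₗ[ℝ] V) (hLsym : ∀ u v : V, ⟪L u, v⟫_ℝ = ⟪u, L v⟫_ℝ)
    (hLpos : ∀ u : V, 0 ≤ ⟪L u, u⟫_ℝ)
    (B : V →ₗ[ℝ] U) (G : V →ₗ[ℝ] V)
    (hG : G = -(LinearMap.adjoint B ∘ₗ B))
    (s : ℕ) (hs : 1 ≤ s) (a : Fin s → Fin s → ℝ)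
    (hA : ∀ x : Fin s → ℝ, 0 ≤ ∑ i, ∑ j, a i j * x i * x j)
    (Δt : ℝ) (hΔt : 0 ≤ Δt)
    (Φn : V) (qn : W) (D : Fin s → V →ₗ[ℝ] W) :
    ∃! X : (Fin s → V) × (Fin s → W) × (Fin s → V) × (Fin s → W),
      (∀ i, X.1 i = Φn + Δt • ∑ j, a i j • X.2.2.1 j) ∧
      (∀ i, X.2.1 i = qn + Δt • ∑ j, a i j • X.2.2.2 j) ∧
      (∀ i, X.2.2.1 i
        = G (L (X.1 i) + (2 : ℝ) • (LinearMap.adjoint (D i)) (X.2.1 i))) ∧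
      (∀ i, X.2.2.2 i = D i (X.2.2.1 i)) := by
  classical
  -- the stage map
  set T : (Fin s → V) →ₗ[ℝ] (Fin s → V) := LinearMap.pi (fun i =>
    LinearMap.proj i - (G ∘ₗ (L ∘ₗ (Δt • ∑ j, a i j • (LinearMap.proj j : (Fin s → V) →ₗ[ℝ] V))
      + (2:ℝ) • ((LinearMap.adjoint (D i)) ∘ₗ
          (Δt • ∑ j, a i j • ((D j) ∘ₗ (LinearMap.proj j : (Fin s → V) →ₗ[ℝ] V))))))) with hTdef
  have hT : ∀ (k : Fin s → V) (i : Fin s), T k i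
      = k i - G (L (Δt • ∑ j, a i j • k j)
        + (2:ℝ) • (LinearMap.adjoint (D i)) (Δt • ∑ j, a i j • D j (k j))) := by
    intro k i
    simp [hTdef, LinearMap.pi_apply, LinearMap.sub_apply, LinearMap.comp_apply,
      LinearMap.add_apply, LinearMap.smul_apply, LinearMap.sum_apply, LinearMap.proj_apply]
  set c : Fin s → V := fun i => G (L Φn + (2:ℝ) • (LinearMap.adjoint (D i)) qn) with hcdef
  -- splitting identity
  have hexp : ∀ (k : Fin s → V) (i : Fin s),
      G (L (Φn + Δt • ∑ j, a i j • k j)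
        + (2:ℝ) • (LinearMap.adjoint (D i)) (qn + Δt • ∑ j, a i j • D j (k j)))
      = c i + G (L (Δt • ∑ j, a i j • k j)
        + (2:ℝ) • (LinearMap.adjoint (D i)) (Δt • ∑ j, a i j • D j (k j))) := by
    intro k i
    rw [map_add L, map_add (LinearMap.adjoint (D i)), smul_add]
    rw [show L Φn + L (Δt • ∑ j, a i j • k j)
        + ((2:ℝ) • (LinearMap.adjoint (D i)) qn
          + (2:ℝ) • (LinearMap.adjoint (D i)) (Δt • ∑ j, a i j • D j (k j)))
      = (L Φn + (2:ℝ) • (LinearMap.adjoint (D i)) qn)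
        + (L (Δt • ∑ j, a i j • k j)
          + (2:ℝ) • (LinearMap.adjoint (D i)) (Δt • ∑ j, a i j • D j (k j))) from by abel]
    rw [map_add G]
  -- injectivity of T
  have h0 : ∀ k : Fin s → V, T k = 0 → k = 0 := by
    intro k hk0
    set η : Fin s → V := fun i => L (Δt • ∑ j, a i j • k j)
      + (2:ℝ) • (LinearMap.adjoint (D i)) (Δt • ∑ j, a i j • D j (k j)) with hηdef
    have hkG : ∀ i, k i = G (η i) := by
      intro i
      have := congrFun hk0 i
      rw [hT k i] at this
      have : k i - G (η i) = 0 := this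
      linear_combination (norm := abel) this
    have E1 : ∑ i, ⟪η i, k i⟫_ℝ = -∑ i, ‖B (η i)‖^2 := by
      rw [← Finset.sum_neg_distrib]
      congr 1; ext i
      rw [hkG i, hG]
      simp only [LinearMap.neg_apply, LinearMap.comp_apply, inner_neg_right]
      rw [LinearMap.adjoint_inner_right, real_inner_self_eq_norm_sq]
    have t1 : ∀ i, ⟪L (Δt • ∑ j, a i j • k j), k i⟫_ℝ
        = Δt * ∑ j, a i j * ⟪L (k j), k i⟫_ℝ := by
      intro i
      rw [map_smul, real_inner_smul_left, map_sum, sum_inner]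
      have h : ∑ j, ⟪L (a i j • k j), k i⟫_ℝ = ∑ j, a i j * ⟪L (k j), k i⟫_ℝ :=
        Finset.sum_congr rfl fun j _ => by rw [LinearMap.map_smul, real_inner_smul_left]
      rw [h]
    have t2 : ∀ i, ⟪(2:ℝ) • (LinearMap.adjoint (D i)) (Δt • ∑ j, a i j • D j (k j)), k i⟫_ℝ
        = (2*Δt) * ∑ j, a i j * ⟪D j (k j), D i (k i)⟫_ℝ := by
      intro i
      rw [real_inner_smul_left, LinearMap.adjoint_inner_left, real_inner_smul_left, sum_inner]
      have h : ∑ j, ⟪a i j • D j (k j), D i (k i)⟫_ℝ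
          = ∑ j, a i j * ⟪D j (k j), D i (k i)⟫_ℝ :=
        Finset.sum_congr rfl fun j _ => by rw [real_inner_smul_left]
      rw [h]; ring
    have E2 : ∑ i, ⟪η i, k i⟫_ℝ
        = Δt * (∑ i, ∑ j, a i j * ⟪L (k j), k i⟫_ℝ)
          + (2*Δt) * (∑ i, ∑ j, a i j * ⟪D j (k j), D i (k i)⟫_ℝ) := by
      rw [Finset.mul_sum, Finset.mul_sum, ← Finset.sum_add_distrib]
      refine Finset.sum_congr rfl fun i _ => ?_
      have hηi : η i = L (Δt • ∑ j, a i j • k j)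
          + (2:ℝ) • (LinearMap.adjoint (D i)) (Δt • ∑ j, a i j • D j (k j)) := rfl
      rw [hηi, inner_add_left, t1 i, t2 i]
    have hg1 : 0 ≤ ∑ i, ∑ j, a i j * ⟪L (k j), k i⟫_ℝ :=
      gram_nonneg a hA L hLsym hLpos k
    have hg2 : 0 ≤ ∑ i, ∑ j, a i j * ⟪D j (k j), D i (k i)⟫_ℝ := by
      have := gram_nonneg a hA (LinearMap.id : W →ₗ[ℝ] W) (by intro u v; simp)
        (fun u => real_inner_self_nonneg) (fun i => D i (k i))
      simpa using this
    have hEnn : 0 ≤ ∑ i, ⟪η i, k i⟫_ℝ := by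
      rw [E2]
      have := mul_nonneg hΔt hg1
      have := mul_nonneg (by linarith : (0:ℝ) ≤ 2*Δt) hg2
      linarith
    have hBzero : ∀ i ∈ Finset.univ, ‖B (η i)‖^2 = 0 := by
      have hsum0 : ∑ i, ‖B (η i)‖^2 = 0 := by
        have h1 : ∑ i, ‖B (η i)‖^2 ≤ 0 := by rw [E1] at hEnn; linarith
        have h2 : 0 ≤ ∑ i : Fin s, ‖B (η i)‖^2 :=
          Finset.sum_nonneg fun i _ => sq_nonneg _
        linarith
      intro i hi
      exact (Finset.sum_eq_zero_iff_of_nonneg (fun i _ => sq_nonneg _)).mp hsum0 i hi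
    funext i
    have hB : B (η i) = 0 := by
      have := hBzero i (Finset.mem_univ i)
      have : ‖B (η i)‖ = 0 := by nlinarith [norm_nonneg (B (η i))]
      exact norm_eq_zero.mp this
    rw [Pi.zero_apply, hkG i, hG]
    simp [hB]
  have hinj : Function.Injective T := by
    intro x y hxy
    have : T (x - y) = 0 := by rw [map_sub, hxy, sub_self]
    have := h0 _ this
    exact sub_eq_zero.mp this
  obtain ⟨k, hk⟩ := (LinearMap.injective_iff_surjective.mp hinj) c
  -- equation ⇔ T k = c
  have hiff : ∀ (k' : Fin s → V),
      (∀ i, k' i = G (L (Φn + Δt • ∑ j, a i j • k' j)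
        + (2:ℝ) • (LinearMap.adjoint (D i)) (qn + Δt • ∑ j, a i j • D j (k' j))))
      ↔ T k' = c := by
    intro k'
    constructor
    · intro h
      funext i
      rw [hT k' i]
      have := h i
      rw [hexp k' i] at this
      linear_combination (norm := abel) this
    · intro h i
      have := congrFun h i
      rw [hT k' i] at this
      rw [hexp k' i]
      linear_combination (norm := abel) this
  refine ⟨(fun i => Φn + Δt • ∑ j, a i j • k j,
           fun i => qn + Δt • ∑ j, a i j • D j (k j),
           k, fun i => D i (k i)), ⟨?_, ?_, ?_, ?_⟩, ?_⟩
  · intro i; rfl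
  · intro i; rfl
  · intro i
    exact ((hiff k).mpr hk) i
  · intro i; rfl
  · rintro ⟨Φ', Q', k', l'⟩ ⟨h1, h2, h3, h4⟩
    have h1' : ∀ i, Φ' i = Φn + Δt • ∑ j, a i j • k' j := h1
    have h2' : ∀ i, Q' i = qn + Δt • ∑ j, a i j • l' j := h2
    have h3' : ∀ i, k' i
        = G (L (Φ' i) + (2:ℝ) • (LinearMap.adjoint (D i)) (Q' i)) := h3
    have h4' : ∀ i, l' i = D i (k' i) := h4
    have hQ : ∀ i, Q' i = qn + Δt • ∑ j, a i j • D j (k' j) := by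
      intro i
      rw [h2' i]
      simp only [h4']
    have hk' : ∀ i, k' i = G (L (Φn + Δt • ∑ j, a i j • k' j)
        + (2:ℝ) • (LinearMap.adjoint (D i)) (qn + Δt • ∑ j, a i j • D j (k' j))) := by
      intro i
      rw [h3' i, h1' i, hQ i]
    have hkk : k' = k := hinj (by rw [(hiff k').mp hk', hk])
    subst hkk
    have hΦ : Φ' = fun i => Φn + Δt • ∑ j, a i j • k' j := funext fun i => h1' i
    have hl : l' = fun i => D i (k' i) := funext fun i => h4' i
    have hQe : Q' = fun i => qn + Δt • ∑ j, a i j • D j (k' j) := funext fun i => hQ i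
    rw [Prod.mk.injEq, Prod.mk.injEq, Prod.mk.injEq]
    exact ⟨hΦ, hQe, rfl, hl⟩
end

section
/- (Algebraic stability of the 3-stage 4th-order DIRK method.) Let σ = cos(π/18)/√3 + 1/2 and μ = 1/(6(2σ − 1)²), and consider the Butcher coefficients a_{11} = a_{22} = a_{33} = σ, a_{21} = 1/2 − σ, a_{31} = 2σ, a_{32} = 1 − 4σ, a_{12} = a_{13} = a_{23} = 0, and b = (μ, 1 − 2μ, μ). Then: (i) σ > 0; (ii) b_i ≥ 0 for i = 1, 2, 3 (i.e., μ ≥ 0 and 1 − 2μ ≥ 0); (iii) the symmetric 3×3 matrix M with entries M_{ij} = b_i a_{ij} + b_j a_{ji} − b_i b_j is positive semi-definite. -/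
open scoped BigOperators

/-- Algebraic stability of the 3-stage 4th-order DIRK method with
`σ = cos(π/18)/√3 + 1/2` and `μ = 1/(6(2σ - 1)²)`: `σ > 0`, the weights are
nonnegative, and the stability matrix `M` is positive semi-definite. -/
theorem dirk4_algebraically_stable
    (σ μ : ℝ)
    (hσ : σ = Real.cos (Real.pi / 18) / Real.sqrt 3 + 1/2)
    (hμ : μ = 1 / (6 * (2 * σ - 1) ^ 2))
    (a : Fin 3 → Fin 3 → ℝ)
    (ha : a = ![![σ, 0, 0], ![1/2 - σ, σ, 0], ![2 * σ, 1 - 4 * σ, σ]])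
    (b : Fin 3 → ℝ) (hb : b = ![μ, 1 - 2 * μ, μ]) :
    0 < σ ∧
    (∀ i : Fin 3, 0 ≤ b i) ∧
    (∀ x : Fin 3 → ℝ,
      0 ≤ ∑ i, ∑ j, (b i * a i j + b j * a j i - b i * b j) * x i * x j) := by
  set c := Real.cos (Real.pi / 18) with hcdef
  have hr : (Real.sqrt 3) ^ 2 = 3 := Real.sq_sqrt (by norm_num)
  have hr0 : (0:ℝ) < Real.sqrt 3 := Real.sqrt_pos.mpr (by norm_num)
  have hc : (1:ℝ)/2 ≤ c := by
    rw [hcdef, show (1:ℝ)/2 = Real.cos (Real.pi/3) from (Real.cos_pi_div_three).symm]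
    apply Real.cos_le_cos_of_nonneg_of_le_pi
    · positivity
    · linarith [Real.pi_pos]
    · linarith [Real.pi_pos]
  have hc3 : 4 * c ^ 3 - 3 * c = Real.sqrt 3 / 2 := by
    have h := Real.cos_three_mul (Real.pi / 18)
    rw [show 3 * (Real.pi / 18) = Real.pi / 6 by ring, Real.cos_pi_div_six] at h
    linarith [h]
  have hs : 2 * σ - 1 = 2 * c / Real.sqrt 3 := by rw [hσ]; ring
  have hσpos : 0 < σ := by
    rw [hσ]
    have : 0 < c / Real.sqrt 3 := by positivity
    linarith
  -- cubic identity
  have hcube : (2 * σ - 1) ^ 3 = (2 * σ - 1) + 1/3 := by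
    rw [hs]
    field_simp
    linear_combination 6 * hc3 - (6 * c + Real.sqrt 3) * hr
  have hsq : (2 * σ - 1) ^ 2 = 4 * c ^ 2 / 3 := by
    rw [hs, div_pow, hr]; ring
  have h2 : (2:ℝ) ≤ 6 * (2 * σ - 1) ^ 2 := by
    rw [hsq]; nlinarith [hc]
  have hμ0 : 0 ≤ μ := by rw [hμ]; positivity
  have hμle : μ ≤ 1/2 := by
    rw [hμ]
    exact one_div_le_one_div_of_le (by norm_num) h2
  have hμ' : μ * (6 * (2 * σ - 1) ^ 2) = 1 := by
    rw [hμ]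
    field_simp
    exact div_self (by rw [hs]; have : 0 < c := by linarith
                       positivity)
  have hE : (2 * σ - 1) + 4 * μ * (1 - 3 * σ) = 0 := by
    have h := hμ'
    nlinarith [hcube, hμ', h2]
  refine ⟨hσpos, ?_, ?_⟩
  · intro i
    fin_cases i <;> simp [hb] <;> linarith
  · intro x
    have hsum : ∑ i, ∑ j, (b i * a i j + b j * a j i - b i * b j) * x i * x j
        = μ * (2 * σ - μ) * (x 0 - 2 * x 1 + x 2) ^ 2 := by
      subst ha hb
      simp [Fin.sum_univ_three]
      linear_combination ((x 1) ^ 2 - x 0 * x 1) * hE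
    rw [hsum]
    have hσhalf : (1:ℝ)/2 ≤ σ := by
      rw [hσ]
      have : 0 ≤ c / Real.sqrt 3 := by positivity
      linarith
    have h2σμ : 0 ≤ 2 * σ - μ := by linarith
    positivity
end

section
/- (Energy dissipation law of the EQ-reformulated/linearized gradient flow, continuous in time.) Let V and W be finite-dimensional real inner product spaces and L : V → V a self-adjoint linear operator. Let Φ : ℝ → V and q : ℝ → W be differentiable, let D : ℝ → (V → W linear) and G : ℝ → (V → V linear) be families of linear maps with ⟨v, G(t) v⟩ ≤ 0 for all t ∈ ℝ and v ∈ V. Suppose that for all t: Φ′(t) = G(t) μ(t) where μ(t) = L Φ(t) + 2 D(t)* q(t), and q′(t) = D(t) Φ′(t). Then the energy ℱ(t) = (1/2)⟨Φ(t), L Φ(t)⟩ + ‖q(t)‖² is differentiable with ℱ′(t) = ⟨μ(t), G(t) μ(t)⟩ ≤ 0 for all t; in particular ℱ is nonincreasing on ℝ. -/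
open scoped InnerProductSpace

/-- Energy dissipation law of the EQ-reformulated/linearized gradient flow,
continuous in time: along solutions of `Φ' = G μ`, `q' = D Φ'` with
`μ = LΦ + 2D*q`, the quadratized energy `ℱ = (1/2)⟪Φ, LΦ⟫ + ‖q‖²` satisfies
`ℱ' = ⟪μ, Gμ⟫ ≤ 0` and is nonincreasing. -/
theorem eq_reformulated_energy_dissipation
    {V W : Type*} [NormedAddCommGroup V] [InnerProductSpace ℝ V]
    [FiniteDimensional ℝ V]
    [NormedAddCommGroup W] [InnerProductSpace ℝ W] [FiniteDimensional ℝ W]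
    (L : V →ₗ[ℝ] V) (hLsym : ∀ u v : V, ⟪L u, v⟫_ℝ = ⟪u, L v⟫_ℝ)
    (Φ : ℝ → V) (q : ℝ → W) (Φ' : ℝ → V) (q' : ℝ → W)
    (D : ℝ → V →ₗ[ℝ] W) (G : ℝ → V →ₗ[ℝ] V)
    (hG : ∀ (t : ℝ) (v : V), ⟪v, G t v⟫_ℝ ≤ 0)
    (hΦ : ∀ t, HasDerivAt Φ (Φ' t) t) (hq : ∀ t, HasDerivAt q (q' t) t)
    (μ : ℝ → V)
    (hμ : ∀ t, μ t = L (Φ t) + (2 : ℝ) • (LinearMap.adjoint (D t)) (q t))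
    (heq1 : ∀ t, Φ' t = G t (μ t)) (heq2 : ∀ t, q' t = D t (Φ' t))
    (F : ℝ → ℝ)
    (hF : ∀ t, F t = (1/2) * ⟪Φ t, L (Φ t)⟫_ℝ + ‖q t‖ ^ 2) :
    (∀ t, HasDerivAt F (⟪μ t, G t (μ t)⟫_ℝ) t) ∧
    (∀ t, ⟪μ t, G t (μ t)⟫_ℝ ≤ 0) ∧
    Antitone F := by
  have hd : ∀ t, HasDerivAt F (⟪μ t, G t (μ t)⟫_ℝ) t := by
    intro t
    have hFfun : F = fun s => (1/2) * ⟪Φ s, L (Φ s)⟫_ℝ + ⟪q s, q s⟫_ℝ := by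
      funext s
      rw [hF s, real_inner_self_eq_norm_sq]
    have hLΦ : HasDerivAt (fun s => L (Φ s)) (L (Φ' t)) t :=
      (L.toContinuousLinearMap.hasFDerivAt.comp_hasDerivAt t (hΦ t))
    have h1 : HasDerivAt (fun s => ⟪Φ s, L (Φ s)⟫_ℝ)
        (⟪Φ t, L (Φ' t)⟫_ℝ + ⟪Φ' t, L (Φ t)⟫_ℝ) t :=
      (hΦ t).inner ℝ hLΦ
    have h2 : HasDerivAt (fun s => ⟪q s, q s⟫_ℝ)
        (⟪q t, q' t⟫_ℝ + ⟪q' t, q t⟫_ℝ) t :=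
      (hq t).inner ℝ (hq t)
    have hD : HasDerivAt F
        ((1/2) * (⟪Φ t, L (Φ' t)⟫_ℝ + ⟪Φ' t, L (Φ t)⟫_ℝ)
          + (⟪q t, q' t⟫_ℝ + ⟪q' t, q t⟫_ℝ)) t := by
      rw [hFfun]
      exact (h1.const_mul (1/2)).add h2
    have key : ⟪μ t, G t (μ t)⟫_ℝ
        = (1/2) * (⟪Φ t, L (Φ' t)⟫_ℝ + ⟪Φ' t, L (Φ t)⟫_ℝ)
          + (⟪q t, q' t⟫_ℝ + ⟪q' t, q t⟫_ℝ) := by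
      have e1 : ⟪μ t, G t (μ t)⟫_ℝ
          = ⟪L (Φ t), Φ' t⟫_ℝ + (2:ℝ) * ⟪q t, D t (Φ' t)⟫_ℝ := by
        rw [← heq1 t, hμ t, inner_add_left, real_inner_smul_left,
          LinearMap.adjoint_inner_left]
      rw [e1, ← heq2 t, hLsym, real_inner_comm (q' t) (q t)]
      have : ⟪Φ' t, L (Φ t)⟫_ℝ = ⟪Φ t, L (Φ' t)⟫_ℝ := by
        rw [← hLsym, real_inner_comm]
      rw [this]
      ring
    rw [key]; exact hD
  refine ⟨hd, fun t => hG t (μ t), ?_⟩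
  apply antitone_of_deriv_nonpos
  · exact fun t => (hd t).differentiableAt
  · intro t
    rw [(hd t).deriv]
    exact hG t (μ t)
end
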